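/- For integers n ≥ 2 and 0 ≤ m ≤ n-1, define H₂ := Σ_{k=0}^{m} (-1)^k (1+2k)·C(n,m+1+k)·C(n,m-k). Then H₂ = n·C(n-1,m). -/

import Mathlib

open Polynomial Finset


lemma coeff_one_sub_X_pow (p j : ℕ) :
    ((1 - X : ℤ[X]) ^ p).coeff j = (-1) ^ j * p.choose j := by
  have h : (1 - X : ℤ[X]) = (-1) * (X + C (-1)) := by
    simp [map_neg, C_1]; ring
  rw [h, mul_pow, ← C_1, ← map_neg, ← C_pow, coeff_C_mul, coeff_X_add_C_pow]
  rcases le_or_gt j p with hj | hj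
  · have h2 : (-1:ℤ)^p * ((-1)^(p-j)) = (-1)^j := by
      rw [← pow_add]
      have : p + (p - j) = j + 2*(p-j) := by omega
      rw [this, pow_add, pow_mul]; simp
    rw [← mul_assoc, h2]
  · simp [Nat.choose_eq_zero_of_lt hj]

lemma coeff_one_sub_X_sq_pow (p N : ℕ) :
    ((1 - X ^ 2 : ℤ[X]) ^ p).coeff N =
      if Even N then ((-1 : ℤ) ^ (N / 2) * p.choose (N / 2)) else 0 := by
  have h : (1 - X ^ 2 : ℤ[X]) ^ p
      = ∑ k ∈ range (p + 1), C ((-1 : ℤ) ^ k * p.choose k) * X ^ (2 * k) := by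
    rw [sub_eq_add_neg, add_comm, add_pow]
    refine Finset.sum_congr rfl fun k _ => ?_
    rw [neg_pow, ← pow_mul, one_pow, mul_one, C_mul, C_pow, map_neg, C_1]
    simp [C_eq_intCast, C_eq_natCast]
    ring
  rw [h, finset_sum_coeff]
  simp only [coeff_C_mul, coeff_X_pow]
  rcases Nat.even_or_odd N with he | ho
  · have ht2 : Even N := he
    obtain ⟨t, rfl⟩ := he
    have h2 : (t + t) / 2 = t := by omega
    rw [if_pos ht2, h2]
    rcases le_or_gt t p with htp | htp
    · rw [Finset.sum_eq_single t]
      · rw [if_pos (by omega)]; ring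
      · intro b _ hb
        rw [if_neg (by omega), mul_zero]
      · intro hmem; exact absurd (Finset.mem_range.2 (by omega)) hmem
    · rw [Finset.sum_eq_zero, Nat.choose_eq_zero_of_lt htp]
      · simp
      · intro b hb
        rw [if_neg (by simp at hb; omega), mul_zero]
  · obtain ⟨t, rfl⟩ := ho
    rw [if_neg (by simp [Nat.even_iff])]
    refine Finset.sum_eq_zero fun b _ => ?_
    rw [if_neg (by omega), mul_zero]

lemma alt_vandermonde (p N : ℕ) :
    ∑ j ∈ range (N + 1), (-1 : ℤ) ^ j * p.choose j * p.choose (N - j) =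
      if Even N then ((-1 : ℤ) ^ (N / 2) * p.choose (N / 2)) else 0 := by
  have h : ((1 - X : ℤ[X]) ^ p * (1 + X) ^ p) = (1 - X ^ 2 : ℤ[X]) ^ p := by
    rw [← mul_pow]; ring_nf
  have h2 := congrArg (fun q : ℤ[X] => q.coeff N) h
  simp only [coeff_mul] at h2
  rw [Finset.Nat.sum_antidiagonal_eq_sum_range_succ_mk] at h2
  simp only [coeff_one_sub_X_pow, coeff_one_add_X_pow, coeff_one_sub_X_sq_pow] at h2
  rw [← h2]


lemma key (p M : ℕ) :
    ∑ k ∈ range (M + 1), (-1 : ℤ) ^ k * (1 + 2 * k) *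
        ((p + 1).choose (M + 1 + k) * (p + 1).choose (M - k))
      = (p + 1) * p.choose M := by
  set f : ℕ → ℤ := fun j => (-1) ^ j * ((2 * M + 1 : ℤ) - 2 * j) *
      ((p + 1).choose j * (p + 1).choose (2 * M + 1 - j)) with hf
  set T : ℤ := ∑ j ∈ range (M + 1), f j with hT
  -- Step A : LHS = (-1)^M * T
  have stepA : ∑ k ∈ range (M + 1), (-1 : ℤ) ^ k * (1 + 2 * k) *
        ((p + 1).choose (M + 1 + k) * (p + 1).choose (M - k))
      = (-1) ^ M * T := by
    rw [hT, ← Finset.sum_range_reflect (fun j => f j) (M + 1), Finset.mul_sum]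
    refine Finset.sum_congr rfl fun k hk => ?_
    have hk' : k ≤ M := by simpa [Nat.lt_succ_iff] using hk
    have h1 : M + 1 - 1 - k = M - k := by omega
    have h2 : 2 * M + 1 - (M - k) = M + 1 + k := by omega
    have h3 : ((2 * M + 1 : ℤ) - 2 * ((M - k : ℕ) : ℤ)) = 1 + 2 * k := by
      have : ((M - k : ℕ) : ℤ) = (M : ℤ) - k := by omega
      rw [this]; ring
    have h4 : (-1 : ℤ) ^ M * (-1) ^ (M - k) = (-1) ^ k := by
      rw [← pow_add]
      have : M + (M - k) = k + 2 * (M - k) := by omega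
      rw [this, pow_add, pow_mul]; simp
    rw [hf]
    simp only [h1, h2, h3]
    linear_combination (-(1 + 2*(k:ℤ)) * (((p+1).choose (M+1+k) : ℤ)) *
      (((p+1).choose (M-k) : ℤ))) * h4
  -- Step B : S = T + T
  set S : ℤ := ∑ j ∈ range (2 * M + 2), f j with hS
  have stepB : S = T + T := by
    have hsplit : S = (∑ j ∈ range (M + 1), f j) + ∑ j ∈ Ico (M + 1) (2 * M + 2), f j := by
      rw [hS, range_eq_Ico, ← Finset.sum_Ico_consecutive _ (by omega : 0 ≤ M + 1) (by omega : M + 1 ≤ 2 * M + 2), ← range_eq_Ico]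
    have h2 : ∑ j ∈ Ico (M + 1) (2 * M + 2), f j = ∑ i ∈ range (M + 1), f (M + 1 + i) := by
      rw [Finset.sum_Ico_eq_sum_range]
      have : 2 * M + 2 - (M + 1) = M + 1 := by omega
      rw [this]
    have h3 : ∑ i ∈ range (M + 1), f (M + 1 + i) = T := by
      rw [hT, ← Finset.sum_range_reflect (fun j => f j) (M + 1)]
      refine Finset.sum_congr rfl fun i hi => ?_
      have hi' : i ≤ M := by simpa [Nat.lt_succ_iff] using hi
      have e1 : M + 1 - 1 - i = M - i := by omega
      have e2 : 2 * M + 1 - (M + 1 + i) = M - i := by omega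
      have e3 : 2 * M + 1 - (M - i) = M + 1 + i := by omega
      have e4 : ((M - i : ℕ) : ℤ) = (M : ℤ) - i := by omega
      have e5 : (-1 : ℤ) ^ (M + 1 + i) = -(-1 : ℤ) ^ (M - i) := by
        have : M + 1 + i = (M - i) + (2 * i + 1) := by omega
        rw [this, pow_add]
        simp [pow_add, pow_mul, pow_succ]
      rw [hf]
      simp only [e1, e2, e3, e4, e5]
      push_cast
      ring
    rw [hsplit, h2, h3, hT]
  -- Step C : S = S1 + S1
  set S1 : ℤ := ∑ j ∈ range (2 * M + 2),
      (-1 : ℤ) ^ j * ((2 * M + 1 - j : ℕ) : ℤ) *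
        ((p + 1).choose j * (p + 1).choose (2 * M + 1 - j)) with hS1
  have stepC : S = S1 + S1 := by
    have hfsplit : ∀ j ∈ range (2 * M + 2), f j =
        (-1 : ℤ) ^ j * ((2 * M + 1 - j : ℕ) : ℤ) *
          ((p + 1).choose j * (p + 1).choose (2 * M + 1 - j))
        - (-1 : ℤ) ^ j * (j : ℤ) *
          ((p + 1).choose j * (p + 1).choose (2 * M + 1 - j)) := by
      intro j hj
      have hj' : j ≤ 2 * M + 1 := by simpa [Nat.lt_succ_iff] using hj
      have e1 : ((2 * M + 1 - j : ℕ) : ℤ) = 2 * M + 1 - (j : ℤ) := by omega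
      rw [hf, e1]
      ring
    have hS2 : ∑ j ∈ range (2 * M + 2),
        (-1 : ℤ) ^ j * (j : ℤ) * ((p + 1).choose j * (p + 1).choose (2 * M + 1 - j))
        = -S1 := by
      rw [hS1, ← Finset.sum_range_reflect (fun j => (-1 : ℤ) ^ j * (j : ℤ) *
        ((p + 1).choose j * (p + 1).choose (2 * M + 1 - j))) (2 * M + 2), ← Finset.sum_neg_distrib]
      refine Finset.sum_congr rfl fun j hj => ?_
      have hj' : j ≤ 2 * M + 1 := by simpa [Nat.lt_succ_iff] using hj
      have e1 : 2 * M + 2 - 1 - j = 2 * M + 1 - j := by omega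
      have e2 : 2 * M + 1 - (2 * M + 1 - j) = j := by omega
      have e3 : (-1 : ℤ) ^ (2 * M + 1 - j) = -(-1 : ℤ) ^ j := by
        have h5 : 2 * M + 1 - j + j = 2 * M + 1 := by omega
        have h6 : (-1 : ℤ) ^ (2 * M + 1) = -1 := by
          rw [pow_succ, pow_mul]; simp
        have h7 : (-1 : ℤ) ^ j * (-1 : ℤ) ^ j = 1 := by
          rw [← pow_add, ← two_mul, pow_mul]; simp
        have h8 : (-1 : ℤ) ^ (2 * M + 1 - j) = (-1) ^ (2 * M + 1) * (-1) ^ j := by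
          calc (-1 : ℤ) ^ (2 * M + 1 - j)
              = (-1 : ℤ) ^ (2 * M + 1 - j) * ((-1) ^ j * (-1) ^ j) := by rw [h7, mul_one]
            _ = (-1 : ℤ) ^ (2 * M + 1 - j + j) * (-1) ^ j := by rw [pow_add]; ring
            _ = (-1 : ℤ) ^ (2 * M + 1) * (-1) ^ j := by rw [h5]
        rw [h8, h6]; ring
      simp only [e1, e2, e3]
      push_cast [Nat.cast_sub (by omega : j ≤ 2 * M + 1)]
      ring
    rw [hS, Finset.sum_congr rfl hfsplit, Finset.sum_sub_distrib, hS2, ← hS1]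
    ring
  -- Step D : S1 = (p+1) * W
  set W : ℤ := ∑ j ∈ range (2 * M + 1),
      (-1 : ℤ) ^ j * ((p + 1).choose j * p.choose (2 * M - j)) with hW
  have stepD : S1 = (p + 1) * W := by
    rw [hS1, Finset.sum_range_succ]
    have hlast : ((2 * M + 1 - (2 * M + 1) : ℕ) : ℤ) = 0 := by simp
    rw [hlast]
    rw [hW, Finset.mul_sum]
    rw [mul_zero, zero_mul, add_zero]
    refine Finset.sum_congr rfl fun j hj => ?_
    have hj' : j ≤ 2 * M := by simpa [Nat.lt_succ_iff] using hj
    have e0 : 2 * M - j + 1 = 2 * M + 1 - j := by omega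
    have habs : (p + 1) * p.choose (2 * M - j) =
        (p + 1).choose (2 * M + 1 - j) * (2 * M + 1 - j) := by
      rw [← e0]
      exact Nat.add_one_mul_choose_eq p (2 * M - j)
    have habsz : ((p + 1 : ℕ) : ℤ) * (p.choose (2 * M - j) : ℤ) =
        ((p + 1).choose (2 * M + 1 - j) : ℤ) * ((2 * M + 1 - j : ℕ) : ℤ) := by
      exact_mod_cast congrArg (fun x : ℕ => (x : ℤ)) habs
    push_cast at habsz ⊢
    linear_combination (-(-1 : ℤ) ^ j * ((p + 1).choose j : ℤ)) * habsz
  -- Step E : W = (-1)^M * C(p, M)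
  have stepE : W = (-1) ^ M * p.choose M := by
    have hA : ∑ j ∈ range (2 * M + 1), (-1 : ℤ) ^ j * p.choose j * p.choose (2 * M - j)
        = (-1) ^ M * p.choose M := by
      have := alt_vandermonde p (2 * M)
      rw [if_pos (by exact ⟨M, by omega⟩)] at this
      have h2 : 2 * M / 2 = M := by omega
      rw [h2] at this
      exact this
    have hB : ∑ i ∈ range (2 * M), (-1 : ℤ) ^ i * p.choose i * p.choose (2 * M - 1 - i)
        = 0 := by
      rcases Nat.eq_zero_or_pos M with hM | hM
      · subst hM; simp
      · have hav := alt_vandermonde p (2 * M - 1)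
        rw [if_neg (by rw [Nat.even_sub (by omega : 1 ≤ 2 * M)]; simp [Nat.even_iff])] at hav
        have h2 : 2 * M - 1 + 1 = 2 * M := by omega
        rw [h2] at hav
        exact hav
    -- decompose W via Pascal
    have hWsplit : W = (∑ i ∈ range (2 * M),
          (-1 : ℤ) ^ (i + 1) * ((p.choose i : ℤ) + p.choose (i + 1)) * p.choose (2 * M - 1 - i))
        + p.choose (2 * M) := by
      rw [hW, Finset.sum_range_succ']
      congr 1
      · refine Finset.sum_congr rfl fun i hi => ?_
        have e1 : 2 * M - (i + 1) = 2 * M - 1 - i := by omega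
        rw [Nat.choose_succ_succ, e1]
        push_cast
        ring
      · simp
    have hAsplit : ∑ j ∈ range (2 * M + 1), (-1 : ℤ) ^ j * p.choose j * p.choose (2 * M - j)
        = (∑ i ∈ range (2 * M),
          (-1 : ℤ) ^ (i + 1) * (p.choose (i + 1) : ℤ) * p.choose (2 * M - 1 - i))
        + p.choose (2 * M) := by
      rw [Finset.sum_range_succ']
      congr 1
      · refine Finset.sum_congr rfl fun i hi => ?_
        have e1 : 2 * M - (i + 1) = 2 * M - 1 - i := by omega
        rw [e1]
      · simp
    have hdiff : ∀ i ∈ range (2 * M),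
        (-1 : ℤ) ^ (i + 1) * ((p.choose i : ℤ) + p.choose (i + 1)) * p.choose (2 * M - 1 - i)
        = (-1 : ℤ) ^ (i + 1) * (p.choose (i + 1) : ℤ) * p.choose (2 * M - 1 - i)
          + (-1) * ((-1 : ℤ) ^ i * p.choose i * p.choose (2 * M - 1 - i)) := by
      intro i _
      rw [pow_succ]
      ring
    rw [hWsplit, Finset.sum_congr rfl hdiff, Finset.sum_add_distrib, ← Finset.mul_sum, hB,
      mul_zero, add_zero, ← hAsplit, hA]
  -- assemble
  have hT1 : T = S1 := by
    have := stepB.symm.trans stepC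
    linarith
  rw [stepA, hT1, stepD, stepE]
  have hsq : (-1 : ℤ) ^ M * (-1 : ℤ) ^ M = 1 := by
    rw [← pow_add, ← two_mul, pow_mul]; simp
  linear_combination ((p : ℤ) + 1) * (p.choose M : ℤ) * hsq

/-- Binomial coefficient extended to integer arguments: 0 unless 0 ≤ k ≤ n. -/
def ichoose (n k : ℤ) : ℤ :=
  if 0 ≤ k ∧ k ≤ n then (n.toNat).choose k.toNat else 0

lemma ichoose_eq (n k : ℤ) (hn : 0 ≤ n) (hk : 0 ≤ k) :
    ichoose n k = (n.toNat).choose k.toNat := by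
  unfold ichoose
  split_ifs with h
  · rfl
  · push_neg at h
    have h2 : n < k := h hk
    rw [Nat.choose_eq_zero_of_lt (by omega)]
    simp

theorem H2_identity (n m : ℤ) (hn : 2 ≤ n) (hm0 : 0 ≤ m) (hm1 : m ≤ n - 1) :
    ∑ k ∈ Finset.Icc (0 : ℤ) m, (-1 : ℤ) ^ k.toNat * (1 + 2 * k) *
        (ichoose n (m + 1 + k) * ichoose n (m - k))
    = n * ichoose (n - 1) m := by
  set M := m.toNat with hM
  set p := (n - 1).toNat with hp
  have hmM : m = (M : ℤ) := by omega
  have hnp : n = ((p : ℤ) + 1) := by omega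
  have hmap : Finset.Icc (0 : ℤ) m =
      Finset.map ⟨(Nat.cast : ℕ → ℤ), Nat.cast_injective⟩ (Finset.range (M + 1)) := by
    ext x
    simp only [Finset.mem_Icc, Finset.mem_map, Finset.mem_range, Function.Embedding.coeFn_mk]
    constructor
    · rintro ⟨h1, h2⟩
      exact ⟨x.toNat, by omega, by omega⟩
    · rintro ⟨a, ha, rfl⟩
      constructor <;> omega
  rw [hmap, Finset.sum_map]
  simp only [Function.Embedding.coeFn_mk]
  have hterm : ∀ k ∈ Finset.range (M + 1),
      (-1 : ℤ) ^ ((k : ℤ)).toNat * (1 + 2 * (k : ℤ)) *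
        (ichoose n (m + 1 + (k : ℤ)) * ichoose n (m - (k : ℤ)))
      = (-1 : ℤ) ^ k * (1 + 2 * k) *
        ((p + 1).choose (M + 1 + k) * (p + 1).choose (M - k)) := by
    intro k hk
    have hkM : k ≤ M := by simpa [Nat.lt_succ_iff] using hk
    have e0 : ((k : ℤ)).toNat = k := by omega
    have en : n.toNat = p + 1 := by omega
    have e1 : ichoose n (m + 1 + (k : ℤ)) = ((p + 1).choose (M + 1 + k) : ℤ) := by
      rw [ichoose_eq n _ (by omega) (by omega), en,
        (by omega : (m + 1 + (k : ℤ)).toNat = M + 1 + k)]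
    have e2 : ichoose n (m - (k : ℤ)) = ((p + 1).choose (M - k) : ℤ) := by
      rw [ichoose_eq n _ (by omega) (by omega), en,
        (by omega : (m - (k : ℤ)).toNat = M - k)]
    rw [e0, e1, e2]
  rw [Finset.sum_congr rfl hterm]
  have hrhs : n * ichoose (n - 1) m = ((p : ℤ) + 1) * (p.choose M : ℤ) := by
    rw [ichoose_eq (n - 1) m (by omega) hm0]
    rw [show (n - 1).toNat = p from rfl, show m.toNat = M from rfl, hnp]
  rw [hrhs]
  have := key p M
  push_cast at this ⊢
  exact this
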